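/- arXiv:2508.11345 — 2 statements merged into one kernel-verified Lean document; each statement's English description precedes it below -/
import Mathlib

section
/- Let s_1, ..., s_{n+1} be exchangeable real-valued random variables. Let q̂ be the ⌈(1-α)(n+1)⌉-th smallest value among s_1, ..., s_n, ∞ (i.e., if ⌈(1-α)(n+1)⌉ ≤ n it is the order statistic of that rank among s_1,...,s_n, otherwise +∞). Then P(s_{n+1} ≤ q̂) ≥ 1 - α. -/
open MeasureTheory

/-- The `k`-th smallest value (1-indexed) of a finite tuple of reals. -/
noncomputable def kthSmallest {n : ℕ} (f : Fin n → ℝ) (k : ℕ) : ℝ :=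
  ((List.ofFn f).mergeSort (fun a b => a ≤ b)).getD (k - 1) 0

section Aux

open Finset

private lemma countP_eq_card' {m : ℕ} (f : Fin m → ℝ) (p : ℝ → Prop) [DecidablePred p] :
    (List.ofFn f).countP (fun y => decide (p y)) = (univ.filter (fun i => p (f i))).card := by
  rw [List.ofFn_eq_map, List.countP_map, Fin.univ_def]
  simp [Finset.filter, Finset.card, Multiset.countP_eq_card_filter, Function.comp,
    List.countP_eq_length_filter]; rfl

private lemma sorted_rel' {l : List ℝ} (hs : l.Pairwise (· ≤ ·)) {i j : ℕ} (hij : i ≤ j)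
    (hj : j < l.length) : l[i]'(by omega) ≤ l[j] := by
  exact hs.sortedLE.getElem_le_getElem_of_le hij

private lemma sorted_countP_ge' {l : List ℝ} (hs : l.Pairwise (· ≤ ·)) {k : ℕ} (hk : k < l.length)
    (p : ℝ → Bool) (hp : ∀ y, y ≤ l[k] → p y) : k + 1 ≤ l.countP p := by
  have h1 : l.countP p = (l.take (k+1)).countP p + (l.drop (k+1)).countP p := by
    rw [← List.countP_append, List.take_append_drop]
  have h2 : (l.take (k+1)).countP p = (l.take (k+1)).length := by
    rw [List.countP_eq_length]
    intro a ha
    obtain ⟨i, hi, rfl⟩ := List.getElem_of_mem ha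
    rw [List.length_take] at hi
    rw [List.getElem_take]
    exact hp _ (sorted_rel' hs (by omega) hk)
  rw [h1, h2, List.length_take]
  omega

private lemma sorted_countP_le' {l : List ℝ} (hs : l.Pairwise (· ≤ ·)) {k : ℕ} (hk : k < l.length)
    (p : ℝ → Bool) (hp : ∀ y, l[k] ≤ y → p y = false) : l.countP p ≤ k := by
  have h1 : l.countP p = (l.take k).countP p + (l.drop k).countP p := by
    rw [← List.countP_append, List.take_append_drop]
  have h2 : (l.drop k).countP p = 0 := by
    rw [List.countP_eq_zero]
    intro a ha
    obtain ⟨i, hi, rfl⟩ := List.getElem_of_mem ha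
    rw [List.getElem_drop]
    simp only [List.length_drop] at hi
    simp [hp _ (sorted_rel' hs (Nat.le_add_right k i) (by omega))]
  have h3 := List.countP_le_length (l := l.take k) (p := p)
  rw [List.length_take] at h3
  omega

private lemma filter_card_eq_countP' {m : ℕ} (f : Fin m → ℝ) (p : ℝ → Prop) [DecidablePred p] :
    (univ.filter (fun i => p (f i))).card
      = ((List.ofFn f).mergeSort (fun a b => a ≤ b)).countP (fun y => decide (p y)) := by
  rw [← countP_eq_card', ← List.Perm.countP_eq _ (List.mergeSort_perm (List.ofFn f) _)]

private lemma kth_le_iff' {m k : ℕ} (f : Fin m → ℝ) (hk1 : 1 ≤ k) (hk2 : k ≤ m) (x : ℝ) :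
    x ≤ kthSmallest f k ↔ (univ.filter (fun i => f i < x)).card < k := by
  set l := (List.ofFn f).mergeSort (fun a b => a ≤ b) with hl
  have hs : l.Pairwise (· ≤ ·) := List.pairwise_mergeSort' (· ≤ ·) (List.ofFn f)
  have hlen : l.length = m := by
    rw [hl, (List.mergeSort_perm (List.ofFn f) _).length_eq, List.length_ofFn]
  have hidx : k - 1 < l.length := by omega
  have hget : kthSmallest f k = l[k-1] := by
    rw [kthSmallest, ← hl, List.getD_eq_getElem l 0 hidx]
  rw [hget, filter_card_eq_countP' f (fun y => y < x), ← hl]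
  constructor
  · intro hx
    have := sorted_countP_le' hs hidx (fun y => decide (y < x))
      (fun y hy => by simp; linarith)
    omega
  · intro hcount
    by_contra hx
    push_neg at hx
    have := sorted_countP_ge' hs hidx (fun y => decide (y < x))
      (fun y hy => by simp; linarith)
    omega

private lemma le_kth_card_ge' {m k : ℕ} (f : Fin m → ℝ) (hk1 : 1 ≤ k) (hk2 : k ≤ m) :
    k ≤ (univ.filter (fun i => f i ≤ kthSmallest f k)).card := by
  set l := (List.ofFn f).mergeSort (fun a b => a ≤ b) with hl
  have hs : l.Pairwise (· ≤ ·) := List.pairwise_mergeSort' (· ≤ ·) (List.ofFn f)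
  have hlen : l.length = m := by
    rw [hl, (List.mergeSort_perm (List.ofFn f) _).length_eq, List.length_ofFn]
  have hidx : k - 1 < l.length := by omega
  have hget : kthSmallest f k = l[k-1] := by
    rw [kthSmallest, ← hl, List.getD_eq_getElem l 0 hidx]
  rw [filter_card_eq_countP' f (fun y => y ≤ kthSmallest f k), ← hl]
  have := sorted_countP_ge' hs hidx (fun y => decide (y ≤ kthSmallest f k))
    (fun y hy => by simp [hget]; linarith)
  omega

/-- At least `k` indices have strict rank less than `k`. -/
private lemma rank_count_ge' {m k : ℕ} (a : Fin m → ℝ) (hk1 : 1 ≤ k) (hk2 : k ≤ m) :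
    k ≤ (univ.filter (fun j => (univ.filter (fun i => a i < a j)).card < k)).card := by
  refine le_trans (le_kth_card_ge' a hk1 hk2) (Finset.card_le_card ?_)
  intro j hj
  simp only [Finset.mem_filter, Finset.mem_univ, true_and] at *
  calc (univ.filter (fun i => a i < a j)).card
      ≤ (univ.filter (fun i => a i < kthSmallest a k)).card := by
        apply Finset.card_le_card
        intro i hi
        simp only [Finset.mem_filter, Finset.mem_univ, true_and] at *
        linarith
    _ < k := (kth_le_iff' a hk1 hk2 _).mp le_rfl

private lemma card_filter_comp_perm' {M : ℕ} (σ : Equiv.Perm (Fin M)) (p : Fin M → Prop)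
    [DecidablePred p] :
    (univ.filter (fun i => p (σ i))).card = (univ.filter p).card := by
  conv_rhs => rw [← Finset.map_univ_equiv σ, Finset.filter_map, Finset.card_map]
  rfl

private lemma card_filter_castSucc' {m : ℕ} (a : Fin (m+1) → ℝ) :
    (univ.filter (fun i : Fin (m+1) => a i < a (Fin.last m))).card
      = (univ.filter (fun i : Fin m => a i.castSucc < a (Fin.last m))).card := by
  rw [Fin.univ_castSuccEmb, Finset.filter_cons, if_neg (by simp), Finset.filter_map,
    Finset.card_map]
  rfl

private lemma measurable_rank_set' {M : ℕ} (k : ℕ) (j : Fin M) :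
    MeasurableSet {a : Fin M → ℝ | (univ.filter (fun i => a i < a j)).card < k} := by
  have hg : Measurable (fun a : Fin M → ℝ => ((univ.filter (fun i => a i < a j)).card : ℕ)) := by
    have h : (fun a : Fin M → ℝ => (univ.filter (fun i => a i < a j)).card)
        = fun a => ∑ i, if a i < a j then 1 else 0 := by
      funext a; rw [Finset.card_filter]
    rw [h]
    exact Finset.measurable_sum _ (fun i _ => Measurable.ite
      (measurableSet_lt (measurable_pi_apply i) (measurable_pi_apply j))
      measurable_const measurable_const)
  have h2 : {a : Fin M → ℝ | (univ.filter (fun i => a i < a j)).card < k}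
      = (fun a : Fin M → ℝ => (univ.filter (fun i => a i < a j)).card) ⁻¹' (Set.Iio k) := rfl
  rw [h2]
  exact hg (by trivial)

end Aux

/-- **Split conformal prediction coverage guarantee.**
If `s 0, …, s n` (i.e. `s_1, …, s_{n+1}`) are exchangeable real random variables and
`q̂` is the `⌈(1-α)(n+1)⌉`-th smallest value among `s_1, …, s_n, ∞`, then
`P(s_{n+1} ≤ q̂) ≥ 1 - α`. -/
theorem split_conformal_coverage
    {Ω : Type*} [MeasurableSpace Ω] (P : Measure Ω) [IsProbabilityMeasure P]
    (n : ℕ) (hn : 0 < n) (α : ℝ) (hα : α ∈ Set.Ioo (0 : ℝ) 1)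
    (s : Fin (n + 1) → Ω → ℝ) (hmeas : ∀ i, Measurable (s i))
    (hexch : ∀ σ : Equiv.Perm (Fin (n + 1)),
      Measure.map (fun ω => fun i => s (σ i) ω) P
        = Measure.map (fun ω => fun i => s i ω) P)
    (k : ℕ) (hk : k = ⌈(1 - α) * (n + 1)⌉₊)
    (qhat : Ω → EReal)
    (hq : ∀ ω, qhat ω =
      if k ≤ n then ((kthSmallest (fun i : Fin n => s i.castSucc ω) k : ℝ) : EReal)
      else ⊤) :
    1 - α ≤ (P {ω | ((s (Fin.last n) ω : ℝ) : EReal) ≤ qhat ω}).toReal := by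
  obtain ⟨hα0, hα1⟩ := hα
  have hk1 : 1 ≤ k := by
    rw [hk]
    have h0 : (0:ℝ) < 1 - α := by linarith
    exact Nat.one_le_ceil_iff.mpr (by positivity)
  by_cases hkn : k ≤ n
  swap
  · have hev : {ω | ((s (Fin.last n) ω : ℝ) : EReal) ≤ qhat ω} = Set.univ := by
      ext ω
      simp [hq ω, if_neg hkn]
    rw [hev]
    simp only [measure_univ, ENNReal.toReal_one]
    linarith
  -- main case
  set F : Ω → Fin (n+1) → ℝ := fun ω i => s i ω with hF
  have hFmeas : Measurable F := measurable_pi_lambda _ (fun i => hmeas i)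
  set μ := P.map F with hμ
  have hprob : IsProbabilityMeasure μ := Measure.isProbabilityMeasure_map hFmeas.aemeasurable
  set B : Fin (n+1) → Set (Fin (n+1) → ℝ) :=
    fun j => {a | (Finset.univ.filter (fun i => a i < a j)).card < k} with hBdef
  have hB : ∀ j, MeasurableSet (B j) := fun j => measurable_rank_set' k j
  have hswap : ∀ j, μ (B j) = μ (B (Fin.last n)) := by
    intro j
    set σ := Equiv.swap j (Fin.last n) with hσ
    have hcomp : Measurable (fun a : Fin (n+1) → ℝ => a ∘ σ) :=
      measurable_pi_lambda _ (fun i => measurable_pi_apply _)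
    have hpre : B j = (fun a : Fin (n+1) → ℝ => a ∘ σ) ⁻¹' (B (Fin.last n)) := by
      ext a
      simp only [hBdef, Set.mem_preimage, Set.mem_setOf_eq, Function.comp]
      rw [hσ]
      simp only [Equiv.swap_apply_right]
      rw [card_filter_comp_perm' (Equiv.swap j (Fin.last n)) (fun i => a i < a j)]
    have hmapinv : μ.map (fun a : Fin (n+1) → ℝ => a ∘ σ) = μ := by
      rw [hμ, Measure.map_map hcomp hFmeas]
      have h : (fun a : Fin (n+1) → ℝ => a ∘ σ) ∘ F = fun ω i => s (σ i) ω := rfl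
      rw [h, hexch σ]
    rw [hpre, ← Measure.map_apply hcomp (hB (Fin.last n)), hmapinv]
  have hsum : (k : ENNReal) ≤ (n + 1) * μ (B (Fin.last n)) := by
    have hpt : ∀ a, (k : ENNReal)
        ≤ ∑ j : Fin (n+1), (B j).indicator (fun _ => (1 : ENNReal)) a := by
      intro a
      have h2 : ∑ j : Fin (n+1), (B j).indicator (fun _ => (1 : ENNReal)) a
          = ((Finset.univ.filter (fun j => a ∈ B j)).card : ENNReal) := by
        rw [Finset.card_filter]
        push_cast
        apply Finset.sum_congr rfl
        intro j _
        by_cases h : a ∈ B j <;> simp [h]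
      rw [h2]
      have h3 := rank_count_ge' a hk1 (by omega : k ≤ n + 1)
      exact_mod_cast Nat.cast_le.mpr h3
    calc (k : ENNReal) = ∫⁻ _, (k : ENNReal) ∂μ := by simp
      _ ≤ ∫⁻ a, ∑ j : Fin (n+1), (B j).indicator (fun _ => (1 : ENNReal)) a ∂μ :=
          lintegral_mono hpt
      _ = ∑ j : Fin (n+1), ∫⁻ a, (B j).indicator (fun _ => (1 : ENNReal)) a ∂μ :=
          lintegral_finset_sum _ (fun j _ => measurable_const.indicator (hB j))
      _ = ∑ j : Fin (n+1), μ (B j) := by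
          apply Finset.sum_congr rfl
          intro j _
          exact lintegral_indicator_one (hB j)
      _ = ∑ _j : Fin (n+1), μ (B (Fin.last n)) := by
          exact Finset.sum_congr rfl (fun j _ => hswap j)
      _ = (n + 1) * μ (B (Fin.last n)) := by
          rw [Finset.sum_const, Finset.card_univ, Fintype.card_fin, nsmul_eq_mul]
          push_cast
          ring
  have hev : {ω | ((s (Fin.last n) ω : ℝ) : EReal) ≤ qhat ω} = F ⁻¹' (B (Fin.last n)) := by
    ext ω
    simp only [Set.mem_setOf_eq, Set.mem_preimage, hq ω, if_pos hkn, hBdef]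
    rw [EReal.coe_le_coe_iff,
      kth_le_iff' (fun i : Fin n => s i.castSucc ω) hk1 hkn (s (Fin.last n) ω)]
    have hcc := card_filter_castSucc' (F ω)
    have h1 : F ω (Fin.last n) = s (Fin.last n) ω := rfl
    constructor
    · intro h
      rw [hcc]
      exact h
    · intro h
      rw [hcc] at h
      exact h
  rw [hev]
  have hPB : P (F ⁻¹' B (Fin.last n)) = μ (B (Fin.last n)) :=
    (Measure.map_apply hFmeas (hB (Fin.last n))).symm
  rw [hPB]
  -- final arithmetic
  have hfin : μ (B (Fin.last n)) ≠ ⊤ := measure_ne_top _ _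
  have htR : (k : ℝ) ≤ (n + 1) * (μ (B (Fin.last n))).toReal := by
    have h1 : ((k : ENNReal)).toReal ≤ ((n + 1 : ENNReal) * μ (B (Fin.last n))).toReal := by
      apply ENNReal.toReal_mono _ hsum
      exact ENNReal.mul_ne_top (by simp) hfin
    have e : ((n : ENNReal) + 1).toReal = (n : ℝ) + 1 := by
      rw [ENNReal.toReal_add (by simp) (by simp)]; simp
    rw [ENNReal.toReal_mul, e] at h1
    simpa using h1
  have hceil : (1 - α) * (n + 1) ≤ (k : ℝ) := hk ▸ Nat.le_ceil _
  have hnpos : (0 : ℝ) < n + 1 := by positivity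
  nlinarith [htR, hceil]
end

section
/- Let s_1, ..., s_{n+1} be exchangeable real-valued random variables that are almost surely pairwise distinct. Let q̂ be the ⌈(1-α)(n+1)⌉-th smallest value among s_1, ..., s_n, ∞. Then P(s_{n+1} ≤ q̂) = ⌈(1-α)(n+1)⌉/(n+1) ≤ (1-α) + 1/(n+1). -/
open MeasureTheory
open scoped ENNReal NNReal

lemma countP_ofFn : ∀ {n : ℕ} (f : Fin n → ℝ) (p : ℝ → Bool),
    (List.ofFn f).countP p = ∑ i, if p (f i) then 1 else 0 := by
  intro n
  induction n with
  | zero => intro f p; simp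
  | succ m ih =>
    intro f p
    rw [List.ofFn_succ, List.countP_cons, Fin.sum_univ_succ, ih (fun i => f i.succ) p]
    by_cases h : p (f 0) <;> simp [h, Nat.add_comm]

lemma sorted_count_lt : ∀ (L : List ℝ), L.Pairwise (· ≤ ·) → ∀ (x : ℝ) (j : ℕ), j < L.length →
    (x ≤ L.getD j 0 ↔ L.countP (fun l => decide (l < x)) ≤ j) := by
  intro L
  induction L with
  | nil => intro _ x j hj; simp at hj
  | cons a t ih =>
    intro h x j hj
    rw [List.pairwise_cons] at h
    obtain ⟨ha, ht⟩ := h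
    cases j with
    | zero =>
      simp only [List.getD_cons_zero, List.countP_cons, Nat.le_zero, Nat.add_eq_zero,
        List.countP_eq_zero]
      constructor
      · intro hxa
        refine ⟨fun l hl => ?_, ?_⟩
        · simp only [decide_eq_true_eq, not_lt]
          exact le_trans hxa (ha l hl)
        · simp [not_lt.mpr hxa]
      · rintro ⟨-, h2⟩
        by_contra hcon
        simp [not_le.mp hcon] at h2
    | succ j =>
      have hjt : j < t.length := by simpa using hj
      rw [List.getD_cons_succ, List.countP_cons, ih ht x j hjt]
      by_cases hax : a < x
      · simp [hax]
      · push_neg at hax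
        have h0 : t.countP (fun l => decide (l < x)) = 0 :=
          List.countP_eq_zero.mpr fun l hl => by
            simp [not_lt.mpr (le_trans hax (ha l hl))]
        simp [not_lt.mpr hax, h0]

lemma le_kthSmallest {n k : ℕ} (hk1 : 1 ≤ k) (hkn : k ≤ n) (f : Fin n → ℝ) (x : ℝ) :
    x ≤ kthSmallest f k ↔ (∑ i, if f i < x then 1 else 0) ≤ k - 1 := by
  have hperm : ((List.ofFn f).mergeSort (fun a b => a ≤ b)).Perm (List.ofFn f) :=
    List.mergeSort_perm _ _
  have hlen : ((List.ofFn f).mergeSort (fun a b => a ≤ b)).length = n := by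
    rw [hperm.length_eq, List.length_ofFn]
  have hsorted : ((List.ofFn f).mergeSort (fun a b => a ≤ b)).Pairwise (· ≤ ·) :=
    List.pairwise_mergeSort' _ _
  have hj : k - 1 < ((List.ofFn f).mergeSort (fun a b => a ≤ b)).length := by omega
  rw [kthSmallest, sorted_count_lt _ hsorted x (k-1) hj, hperm.countP_eq, countP_ofFn]
  simp

noncomputable def rankFn {m : ℕ} (v : Fin m → ℝ) (j : Fin m) : ℕ :=
  ∑ i, if v i ≤ v j then 1 else 0

lemma rankFn_pos {m : ℕ} (v : Fin m → ℝ) (j : Fin m) : 1 ≤ rankFn v j := by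
  have h := Finset.single_le_sum (f := fun i => if v i ≤ v j then 1 else 0)
    (fun i _ => Nat.zero_le _) (Finset.mem_univ j)
  simpa [rankFn] using h

lemma rankFn_le {m : ℕ} (v : Fin m → ℝ) (j : Fin m) : rankFn v j ≤ m := by
  have h : rankFn v j ≤ ∑ _i : Fin m, 1 :=
    Finset.sum_le_sum (fun i _ => by split <;> omega)
  simpa using h

lemma rankFn_strictMono {m : ℕ} (v : Fin m → ℝ) {a b : Fin m} (h : v a < v b) :
    rankFn v a < rankFn v b := by
  apply Finset.sum_lt_sum
  · intro i _
    by_cases hia : v i ≤ v a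
    · simp [hia, hia.trans h.le]
    · simp only [hia, if_false]
      exact Nat.zero_le _
  · exact ⟨b, Finset.mem_univ b, by simp [not_le.mpr h, le_refl]⟩

lemma rankFn_inj {m : ℕ} (v : Fin m → ℝ) (hd : ∀ i j : Fin m, i ≠ j → v i ≠ v j)
    {a b : Fin m} (h : rankFn v a = rankFn v b) : a = b := by
  by_contra hab
  rcases lt_trichotomy (v a) (v b) with hlt | heq | hgt
  · exact absurd h (Nat.ne_of_lt (rankFn_strictMono v hlt))
  · exact hd a b hab heq
  · exact absurd h.symm (Nat.ne_of_lt (rankFn_strictMono v hgt))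

lemma rankFn_surj {m : ℕ} (v : Fin m → ℝ) (hd : ∀ i j : Fin m, i ≠ j → v i ≠ v j)
    {r : ℕ} (hr : r ∈ Finset.Icc 1 m) : ∃ j, rankFn v j = r := by
  have := Finset.surj_on_of_inj_on_of_card_le (s := (Finset.univ : Finset (Fin m)))
    (t := Finset.Icc 1 m) (f := fun j _ => rankFn v j)
    (fun j _ => Finset.mem_Icc.mpr ⟨rankFn_pos v j, rankFn_le v j⟩)
    (fun a b _ _ hab => rankFn_inj v hd hab)
    (by simp)
  obtain ⟨j, _, hj⟩ := this r hr
  exact ⟨j, hj.symm⟩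

lemma rankFn_comp {m : ℕ} (v : Fin m → ℝ) (σ : Equiv.Perm (Fin m)) (j : Fin m) :
    rankFn (fun i => v (σ i)) j = rankFn v (σ j) := by
  unfold rankFn
  exact Equiv.sum_comp σ (fun i => if v i ≤ v (σ j) then 1 else 0)

lemma measurable_rankObs {Ω : Type*} [MeasurableSpace Ω] {m : ℕ} (s : Fin m → Ω → ℝ)
    (h : ∀ i, Measurable (s i)) (j : Fin m) :
    Measurable fun ω => rankFn (fun i => s i ω) j := by
  unfold rankFn
  apply Finset.measurable_sum
  intro i _
  exact Measurable.ite (measurableSet_le (h i) (h j)) measurable_const measurable_const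

lemma measurable_rank_pi {m : ℕ} (j : Fin m) (r : ℕ) :
    MeasurableSet {w : Fin m → ℝ | rankFn w j = r} := by
  have hm : Measurable fun w : Fin m → ℝ => rankFn w j := by
    unfold rankFn
    apply Finset.measurable_sum
    intro i _
    exact Measurable.ite (measurableSet_le (measurable_pi_apply i) (measurable_pi_apply j))
      measurable_const measurable_const
  exact hm (measurableSet_singleton r)

lemma evt_exch {Ω : Type*} [MeasurableSpace Ω] (P : Measure Ω) {m : ℕ} (s : Fin m → Ω → ℝ)
    (hmeas : ∀ i, Measurable (s i))
    (hexch : ∀ σ : Equiv.Perm (Fin m),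
      Measure.map (fun ω => fun i => s (σ i) ω) P = Measure.map (fun ω => fun i => s i ω) P)
    (j j' : Fin m) (r : ℕ) :
    P {ω | rankFn (fun i => s i ω) j = r} = P {ω | rankFn (fun i => s i ω) j' = r} := by
  classical
  set σ := Equiv.swap j' j with hσ
  have hFσ : Measurable (fun ω => fun i : Fin m => s (σ i) ω) :=
    measurable_pi_lambda _ (fun i => hmeas (σ i))
  have hF : Measurable (fun ω => fun i : Fin m => s i ω) :=
    measurable_pi_lambda _ (fun i => hmeas i)
  have hB := measurable_rank_pi (m := m) j' r
  have h1 := congrArg (fun μ => μ {w : Fin m → ℝ | rankFn w j' = r}) (hexch σ)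
  rw [Measure.map_apply hFσ hB, Measure.map_apply hF hB] at h1
  have hpre : (fun ω => fun i : Fin m => s (σ i) ω) ⁻¹' {w | rankFn w j' = r}
      = {ω | rankFn (fun i => s i ω) j = r} := by
    ext ω
    simp only [Set.mem_preimage, Set.mem_setOf_eq]
    rw [rankFn_comp (fun i => s i ω) σ j', Equiv.swap_apply_left j' j]
  have hpre2 : (fun ω => fun i : Fin m => s i ω) ⁻¹' {w | rankFn w j' = r}
      = {ω | rankFn (fun i => s i ω) j' = r} := rfl
  rw [hpre, hpre2] at h1
  exact h1

/-- **Upper coverage bound for split conformal prediction.**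
If `s_1, …, s_{n+1}` are exchangeable and a.s. pairwise distinct, and
`q̂` is the `⌈(1-α)(n+1)⌉`-th smallest value among `s_1, …, s_n, ∞`
(assumed finite: `⌈(1-α)(n+1)⌉ ≤ n`), then
`P(s_{n+1} ≤ q̂) = ⌈(1-α)(n+1)⌉/(n+1) ≤ (1-α) + 1/(n+1)`. -/
theorem split_conformal_upper_bound
    {Ω : Type*} [MeasurableSpace Ω] (P : Measure Ω) [IsProbabilityMeasure P]
    (n : ℕ) (hn : 0 < n) (α : ℝ) (hα : α ∈ Set.Ioo (0 : ℝ) 1)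
    (s : Fin (n + 1) → Ω → ℝ) (hmeas : ∀ i, Measurable (s i))
    (hexch : ∀ σ : Equiv.Perm (Fin (n + 1)),
      Measure.map (fun ω => fun i => s (σ i) ω) P
        = Measure.map (fun ω => fun i => s i ω) P)
    (hdistinct : P {ω | ∀ i j : Fin (n + 1), i ≠ j → s i ω ≠ s j ω} = 1)
    (k : ℕ) (hk : k = ⌈(1 - α) * (n + 1)⌉₊) (hkn : k ≤ n)
    (qhat : Ω → ℝ)
    (hq : ∀ ω, qhat ω = kthSmallest (fun i : Fin n => s i.castSucc ω) k) :
    (P {ω | s (Fin.last n) ω ≤ qhat ω}).toReal = (k : ℝ) / (n + 1) ∧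
      (k : ℝ) / (n + 1) ≤ (1 - α) + 1 / (n + 1) := by
  classical
  obtain ⟨hα0, hα1⟩ := hα
  have hnp : (0:ℝ) < (n:ℝ) + 1 := by positivity
  have hpos : (0:ℝ) < (1 - α) * ((n:ℝ) + 1) := by
    have h1 : (0:ℝ) < 1 - α := by linarith
    positivity
  have hk1 : 1 ≤ k := by
    rw [hk]
    exact Nat.one_le_ceil_iff.mpr hpos
  have hineq : (k : ℝ) / (n + 1) ≤ (1 - α) + 1 / (n + 1) := by
    rw [div_le_iff₀ hnp]
    have hceil : (k : ℝ) < (1 - α) * ((n:ℝ) + 1) + 1 := by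
      rw [hk]; exact_mod_cast Nat.ceil_lt_add_one hpos.le
    have hexp : ((1 - α) + 1 / ((n:ℝ) + 1)) * ((n:ℝ) + 1) = (1 - α) * ((n:ℝ) + 1) + 1 := by
      field_simp
    linarith
  refine ⟨?_, hineq⟩
  set D : Set Ω := {ω | ∀ i j : Fin (n + 1), i ≠ j → s i ω ≠ s j ω} with hDdef
  have hD : MeasurableSet D := by
    have hrw : D = ⋂ (i : Fin (n+1)) (j : Fin (n+1)), {ω | i ≠ j → s i ω ≠ s j ω} := by
      ext ω; simp [hDdef, Set.mem_iInter]
    rw [hrw]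
    refine MeasurableSet.iInter fun i => MeasurableSet.iInter fun j => ?_
    by_cases hij : i = j
    · simp [hij]
    · have hrw2 : {ω | i ≠ j → s i ω ≠ s j ω} = {ω | s i ω = s j ω}ᶜ := by
        ext ω; simp [hij]
      rw [hrw2]
      exact (measurableSet_eq_fun (hmeas i) (hmeas j)).compl
  have hDc : P Dᶜ = 0 := by
    rw [prob_compl_eq_zero_iff hD]; exact hdistinct
  have hE : ∀ (j : Fin (n+1)) (r : ℕ), MeasurableSet {ω | rankFn (fun i => s i ω) j = r} :=
    fun j r => measurable_rankObs s hmeas j (measurableSet_singleton r)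
  -- uniform distribution of the rank of the last score
  have huni : ∀ r : ℕ, r ∈ Finset.Icc 1 (n+1) →
      P {ω | rankFn (fun i => s i ω) (Fin.last n) = r} = ((n:ℝ≥0∞) + 1)⁻¹ := by
    intro r hr
    have hdisj : ((Finset.univ : Finset (Fin (n+1))) : Set (Fin (n+1))).PairwiseDisjoint
        (fun j => {ω | rankFn (fun i => s i ω) j = r} ∩ D) := by
      intro a _ b _ hab
      refine Set.disjoint_left.mpr fun ω hωa hωb => ?_
      exact hab (rankFn_inj (fun i => s i ω) hωa.2 (hωa.1.trans hωb.1.symm))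
    have hcover : (⋃ j ∈ (Finset.univ : Finset (Fin (n+1))),
        ({ω | rankFn (fun i => s i ω) j = r} ∩ D)) = D := by
      ext ω
      simp only [Set.mem_iUnion, Finset.mem_univ, Set.mem_inter_iff, Set.mem_setOf_eq,
        exists_prop, true_and]
      constructor
      · rintro ⟨j, _, hωD⟩; exact hωD
      · intro hωD
        obtain ⟨j, hj⟩ := rankFn_surj (fun i => s i ω) hωD hr
        exact ⟨j, hj, hωD⟩
    have hsum := measure_biUnion_finset (μ := P) hdisj
      (fun j _ => (hE j r).inter hD)
    rw [hcover, hdistinct] at hsum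
    have hterm : ∀ j : Fin (n+1), P ({ω | rankFn (fun i => s i ω) j = r} ∩ D)
        = P {ω | rankFn (fun i => s i ω) (Fin.last n) = r} := by
      intro j
      rw [measure_inter_conull hDc]
      exact evt_exch P s hmeas hexch j (Fin.last n) r
    rw [Finset.sum_congr rfl (fun j _ => hterm j), Finset.sum_const, Finset.card_univ,
      Fintype.card_fin] at hsum
    set p := P {ω | rankFn (fun i => s i ω) (Fin.last n) = r} with hp
    have hsum' : ((n:ℝ≥0∞) + 1) * p = 1 := by
      have h := hsum.symm
      rwa [nsmul_eq_mul, Nat.cast_add, Nat.cast_one] at h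
    have hne : ((n:ℝ≥0∞) + 1) ≠ 0 := by simp
    have hnt : ((n:ℝ≥0∞) + 1) ≠ ⊤ := by simp
    calc p = (((n:ℝ≥0∞) + 1)⁻¹ * ((n:ℝ≥0∞) + 1)) * p := by
            rw [ENNReal.inv_mul_cancel hne hnt, one_mul]
    _ = ((n:ℝ≥0∞) + 1)⁻¹ * (((n:ℝ≥0∞) + 1) * p) := by ring
    _ = ((n:ℝ≥0∞) + 1)⁻¹ := by rw [hsum', mul_one]
  -- the coverage event equals a rank event, modulo D
  have key : ∀ ω ∈ D, (s (Fin.last n) ω ≤ qhat ω ↔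
      rankFn (fun i => s i ω) (Fin.last n) ≤ k) := by
    intro ω hωD
    rw [hq ω, le_kthSmallest hk1 hkn]
    have hsum_eq : rankFn (fun i => s i ω) (Fin.last n)
        = (∑ i : Fin n, if s i.castSucc ω < s (Fin.last n) ω then 1 else 0) + 1 := by
      unfold rankFn
      rw [Fin.sum_univ_castSucc]
      simp only [le_refl, if_true]
      congr 1
      refine Finset.sum_congr rfl fun i _ => ?_
      have hne : s i.castSucc ω ≠ s (Fin.last n) ω :=
        hωD i.castSucc (Fin.last n) (Fin.ne_of_lt (Fin.castSucc_lt_last i))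
      by_cases hlt : s i.castSucc ω < s (Fin.last n) ω
      · simp [hlt, hlt.le]
      · have hnle : ¬ s i.castSucc ω ≤ s (Fin.last n) ω :=
          fun hle => hlt (lt_of_le_of_ne hle hne)
        simp [hlt, hnle]
    omega
  have hAD : {ω | s (Fin.last n) ω ≤ qhat ω} ∩ D
      = (⋃ r ∈ Finset.Icc 1 k, {ω | rankFn (fun i => s i ω) (Fin.last n) = r}) ∩ D := by
    ext ω
    simp only [Set.mem_inter_iff, Set.mem_setOf_eq, Set.mem_iUnion, exists_prop,
      Finset.mem_Icc]
    constructor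
    · rintro ⟨hle, hωD⟩
      exact ⟨⟨rankFn (fun i => s i ω) (Fin.last n),
        ⟨rankFn_pos _ _, (key ω hωD).mp hle⟩, rfl⟩, hωD⟩
    · rintro ⟨⟨r, ⟨hr1, hrk⟩, hre⟩, hωD⟩
      exact ⟨(key ω hωD).mpr (hre ▸ hrk), hωD⟩
  have hdisj2 : ((Finset.Icc 1 k : Finset ℕ) : Set ℕ).PairwiseDisjoint
      (fun r => {ω | rankFn (fun i => s i ω) (Fin.last n) = r}) := by
    intro a _ b _ hab
    exact Set.disjoint_left.mpr fun ω hωa hωb => hab (hωa.symm.trans hωb)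
  have hPU := measure_biUnion_finset (μ := P) hdisj2 (fun r _ => hE (Fin.last n) r)
  have hP1 : P {ω | s (Fin.last n) ω ≤ qhat ω}
      = ∑ r ∈ Finset.Icc 1 k, P {ω | rankFn (fun i => s i ω) (Fin.last n) = r} := by
    rw [← measure_inter_conull hDc, hAD, measure_inter_conull hDc, hPU]
  have hval : ∀ r ∈ Finset.Icc 1 k,
      P {ω | rankFn (fun i => s i ω) (Fin.last n) = r} = ((n:ℝ≥0∞) + 1)⁻¹ := by
    intro r hr
    refine huni r ?_
    rw [Finset.mem_Icc] at hr ⊢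
    omega
  rw [hP1, Finset.sum_congr rfl hval, Finset.sum_const, Nat.card_Icc]
  have hcard : k + 1 - 1 = k := by omega
  rw [hcard, nsmul_eq_mul, ENNReal.toReal_mul, ENNReal.toReal_inv]
  have h1 : ((k:ℝ≥0∞) : ℝ≥0∞).toReal = (k:ℝ) := by simp
  have h2 : (((n:ℝ≥0∞) + 1)).toReal = (n:ℝ) + 1 := by
    simp [ENNReal.toReal_add]
  rw [ENNReal.toReal_natCast, h2, div_eq_mul_inv]
end
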